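/- The set S_{n,k} of F_2-linear codes of the DS form (generated by [H|I_{n-k}] with H ∈ F_4^{(n-k)×n} self-orthogonal of full rank under the Hermitian trace inner product) has cardinality |S_{n,k}| = Π_{r=0}^{n-k-1} (2^{2(n-r)} - 1)(2^{n-k} - 2^r) / (2^{r+1} - 1). -/

import Mathlib

open Finset

noncomputable section

abbrev F2 := ZMod 2
abbrev F4 := GaloisField 2 2

/-- Trace from `F4` to `F2`. -/
def trF : F4 →ₗ[F2] F2 := Algebra.trace F2 F4

/-- Hamming weight of a vector. -/
def wt {α : Type*} [Zero α] {N : ℕ} (x : Fin N → α) : ℕ := Nat.card {i // x i ≠ 0}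

/-- Hermitian trace inner product on `F4^n`. -/
def ipD {n : ℕ} (x y : Fin n → F4) : F2 := trF (∑ i, x i * (y i) ^ 2)

/-- Mixed inner product on `F4^n × F2^m`. -/
def ipDS {n m : ℕ} (x y : (Fin n → F4) × (Fin m → F2)) : F2 :=
  ipD x.1 y.1 + ∑ j, x.2 j * y.2 j

/-- The F2-row space of `H` inside `F4^n`. -/
def rowSpanF2 {n m : ℕ} (H : Fin m → Fin n → F4) : Set (Fin n → F4) :=
  {v | ∃ u : Fin m → F2, v = fun i => ∑ r, algebraMap F2 F4 (u r) * H r i}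

/-- The data-syndrome code generated by the rows of `[H | I_m]`. -/
def CDS {n m : ℕ} (H : Fin m → Fin n → F4) : Set ((Fin n → F4) × (Fin m → F2)) :=
  {w | ∃ u : Fin m → F2, w = (fun i => ∑ r, algebraMap F2 F4 (u r) * H r i, u)}

/-- Dual with respect to the mixed inner product. -/
def dualDS {n m : ℕ} (D : Set ((Fin n → F4) × (Fin m → F2))) :
    Set ((Fin n → F4) × (Fin m → F2)) :=
  {v | ∀ w ∈ D, ipDS w v = 0}

/-- Split weight enumerator. -/
def Bwt {n m : ℕ} (D : Set ((Fin n → F4) × (Fin m → F2))) (i j : ℕ) : ℕ :=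
  Nat.card {w : (Fin n → F4) × (Fin m → F2) // w ∈ D ∧ wt w.1 = i ∧ wt w.2 = j}

/-- q-ary Krawtchouk polynomial `K_t(x; N, q)` evaluated at integer `x`. -/
def kraw (t x N q : ℕ) : ℚ :=
  ∑ s ∈ Finset.range (t + 1),
    (-1 : ℚ) ^ s * ((q : ℚ) - 1) ^ (t - s) * (x.choose s) * ((N - x).choose (t - s))

/-- The ensemble `S_{n,k}` of DS codes. -/
def SDS (n k : ℕ) : Set (Set ((Fin n → F4) × (Fin (n - k) → F2))) :=
  {D | ∃ H : Fin (n - k) → Fin n → F4,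
    LinearIndependent F2 H ∧ (∀ r s, ipD (H r) (H s) = 0) ∧ D = CDS H}

/-- The ensemble `S^⊥_{n,k}` of duals of DS codes. -/
def SDSperp (n k : ℕ) : Set (Set ((Fin n → F4) × (Fin (n - k) → F2))) :=
  {D' | ∃ D ∈ SDS n k, D' = dualDS D}

-- Frobenius as an algebra equiv
def frobAlg : F4 ≃ₐ[F2] F4 :=
  AlgEquiv.ofRingEquiv (f := frobeniusEquiv F4 2) (fun c => by
    simp only [frobeniusEquiv_apply, frobenius_def]
    rw [← map_pow]
    congr 1
    exact ZMod.pow_card c)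

lemma frobAlg_apply (z : F4) : frobAlg z = z ^ 2 := rfl

lemma trF_sq (z : F4) : trF (z ^ 2) = trF z := by
  have h : Function.Injective (algebraMap F2 F4) := (algebraMap F2 F4).injective
  apply h
  show algebraMap F2 F4 (Algebra.trace F2 F4 (z^2)) = algebraMap F2 F4 (Algebra.trace F2 F4 z)
  rw [trace_eq_sum_automorphisms, trace_eq_sum_automorphisms]
  rw [show (z ^ 2) = frobAlg z from rfl]
  exact Fintype.sum_bijective (· * frobAlg) (Group.mulRight_bijective frobAlg)
    _ _ (fun σ => rfl)

lemma trF_algebraMap (c : F2) : trF (algebraMap F2 F4 c) = 0 := by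
  show Algebra.trace F2 F4 (algebraMap F2 F4 c) = 0
  rw [Algebra.trace_algebraMap]
  have : Module.finrank F2 F4 = 2 := GaloisField.finrank 2 (by norm_num)
  rw [this, two_smul]
  exact CharTwo.add_self_eq_zero c

def Bf (n : ℕ) : LinearMap.BilinForm F2 (Fin n → F4) :=
  LinearMap.mk₂ F2 (fun x y => ipD x y)
    (fun x x' y => by
      simp only [ipD, ← map_add, ← Finset.sum_add_distrib]
      congr 1; congr 1; funext i; simp [Pi.add_apply, add_mul])
    (fun c x y => by
      simp only [ipD]
      rw [← map_smul, Finset.smul_sum]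
      congr 1
      refine Finset.sum_congr rfl (fun i _ => ?_)
      simp [Pi.smul_apply, smul_mul_assoc])
    (fun x y y' => by
      simp only [ipD, ← map_add, ← Finset.sum_add_distrib]
      congr 1; congr 1; funext i
      rw [Pi.add_apply, add_pow_char, mul_add])
    (fun c x y => by
      simp only [ipD]
      rw [← map_smul, Finset.smul_sum]
      congr 1
      refine Finset.sum_congr rfl (fun i _ => ?_)
      rw [Pi.smul_apply, smul_pow, mul_smul_comm]
      rw [show (c:F2) ^ 2 = c from ZMod.pow_card c])

lemma Bf_apply {n : ℕ} (x y : Fin n → F4) : Bf n x y = ipD x y := rfl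

lemma Bf_symm {n : ℕ} (x y : Fin n → F4) : Bf n x y = Bf n y x := by
  simp only [Bf_apply, ipD]
  rw [← trF_sq (∑ i, x i * y i ^ 2)]
  congr 1
  rw [sum_pow_char]
  refine Finset.sum_congr rfl (fun i _ => ?_)
  haveI : Fintype F4 := Fintype.ofFinite F4
  have hcard : Fintype.card F4 = 4 := by
    rw [← Nat.card_eq_fintype_card, GaloisField.card 2 2 (by norm_num)]; norm_num
  have h4 : ∀ a : F4, a ^ 4 = a := by
    intro a
    have := FiniteField.pow_card a
    rwa [hcard] at this
  rw [mul_pow, ← pow_mul, show 2*2=4 from rfl, h4]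
  ring
lemma Bf_self {n : ℕ} (x : Fin n → F4) : Bf n x x = 0 := by
  simp only [Bf_apply, ipD]
  have : ∀ i, ∃ c : F2, x i * x i ^ 2 = algebraMap F2 F4 c := by
    intro i
    rcases eq_or_ne (x i) 0 with h | h
    · exact ⟨0, by simp [h]⟩
    · refine ⟨1, ?_⟩
      have : x i * x i ^ 2 = x i ^ 3 := by ring
      rw [this, map_one]
      haveI : Fintype F4 := Fintype.ofFinite F4
      have := FiniteField.pow_card_sub_one_eq_one (x i) h
      have hcard : Fintype.card F4 = 4 := by
        rw [← Nat.card_eq_fintype_card, GaloisField.card 2 2 (by norm_num)]; norm_num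
      rw [hcard] at this
      exact this
  choose c hc using this
  have : (∑ i, x i * x i ^ 2) = algebraMap F2 F4 (∑ i, c i) := by
    rw [map_sum]; exact Finset.sum_congr rfl (fun i _ => hc i)
  rw [this, trF_algebraMap]

lemma Bf_nondeg (n : ℕ) : (Bf n).Nondegenerate := by
  refine (LinearMap.IsRefl.nondegenerate_iff_separatingLeft (B := Bf n) (fun x y h => by rw [Bf_symm]; exact h)).mpr ?_
  intro x hx
  funext i
  have key : ∀ b : F4, Algebra.traceForm F2 F4 (x i) b = 0 := by
    intro b
    obtain ⟨a, rfl⟩ := (frobeniusEquiv F4 2).surjective b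
    set y : Fin n → F4 := Pi.single i a with hy
    have h1 := hx y
    rw [Bf_apply, ipD] at h1
    have h2 : ∑ j, x j * (y j) ^ 2 = x i * a ^ 2 := by
      simp only [hy]
      rw [Finset.sum_eq_single i]
      · rw [Pi.single_eq_same]
      · intro j _ hj
        rw [Pi.single_eq_of_ne hj]
        ring
      · intro h; exact absurd (Finset.mem_univ i) h
    rw [h2] at h1
    exact h1
  have hnd := traceForm_nondegenerate F2 F4
  show x i = 0
  exact hnd.1 (x i) key

abbrev Vn (n : ℕ) := Fin n → F4

lemma Bf_refl (n : ℕ) : (Bf n).IsRefl := fun x y h => by rw [Bf_symm]; exact h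

def Wsp {n m : ℕ} (H : Fin m → Vn n) : Submodule F2 (Vn n) :=
  Submodule.span F2 (Set.range H)

def Fib {n m : ℕ} (H : Fin m → Vn n) : Set (Vn n) :=
  {v | v ∈ (Bf n).orthogonal (Wsp H) ∧ v ∉ Wsp H}

def Good (n m : ℕ) : Set (Fin m → Vn n) :=
  {H | LinearIndependent F2 H ∧ ∀ r s, ipD (H r) (H s) = 0}

lemma mem_orth_of_forall {n m : ℕ} (H : Fin m → Vn n) (v : Vn n)
    (h : ∀ i, Bf n (H i) v = 0) : v ∈ (Bf n).orthogonal (Wsp H) := by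
  intro u hu
  have hle : Wsp H ≤ LinearMap.ker ((Bf n).flip v) := by
    rw [Wsp, Submodule.span_le]
    rintro _ ⟨i, rfl⟩
    exact h i
  exact hle hu

lemma wsp_le_orth {n m : ℕ} {H : Fin m → Vn n}
    (h2 : ∀ r s, ipD (H r) (H s) = 0) : Wsp H ≤ (Bf n).orthogonal (Wsp H) := by
  rw [Wsp, Submodule.span_le]
  rintro _ ⟨i, rfl⟩
  apply mem_orth_of_forall
  intro j
  rw [Bf_apply]
  exact h2 j i

lemma finrank_Vn (n : ℕ) : Module.finrank F2 (Vn n) = 2 * n := by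
  rw [Module.finrank_pi_fintype]
  have h2 : Module.finrank F2 F4 = 2 := GaloisField.finrank 2 (by norm_num)
  simp [h2, mul_comm]

lemma card_submodule {n : ℕ} (W : Submodule F2 (Vn n)) :
    Nat.card W = 2 ^ Module.finrank F2 W := by
  haveI : Fintype W := Fintype.ofFinite W
  rw [Nat.card_eq_fintype_card, Module.card_eq_pow_finrank (K := F2) (V := W), ZMod.card]

lemma fib_card {n m : ℕ} (H : Fin m → Vn n) (h1 : LinearIndependent F2 H)
    (h2 : ∀ r s, ipD (H r) (H s) = 0) :
    Nat.card (Fib H) = 2 ^ (2 * n - m) - 2 ^ m := by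
  have hle : Wsp H ≤ (Bf n).orthogonal (Wsp H) := wsp_le_orth h2
  have hW : Module.finrank F2 (Wsp H) = m := by
    rw [Wsp, finrank_span_eq_card h1, Fintype.card_fin]
  have hO : Module.finrank F2 ((Bf n).orthogonal (Wsp H)) = 2 * n - m := by
    rw [LinearMap.BilinForm.finrank_orthogonal (Bf_nondeg n), finrank_Vn, hW]
  have heq : Fib H = (((Bf n).orthogonal (Wsp H) : Set (Vn n)) \ (Wsp H : Set (Vn n))) := rfl
  rw [heq, Nat.card_coe_set_eq, Set.ncard_diff hle]
  have hc1 : ((Bf n).orthogonal (Wsp H) : Set (Vn n)).ncard = 2 ^ (2 * n - m) := by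
    rw [← Nat.card_coe_set_eq]
    rw [show Nat.card ((Bf n).orthogonal (Wsp H) : Set (Vn n)) = Nat.card ((Bf n).orthogonal (Wsp H)) from rfl]
    rw [card_submodule, hO]
  have hc2 : ((Wsp H : Set (Vn n))).ncard = 2 ^ m := by
    rw [← Nat.card_coe_set_eq]
    rw [show Nat.card ((Wsp H : Set (Vn n))) = Nat.card (Wsp H) from rfl]
    rw [card_submodule, hW]
  rw [hc1, hc2]

lemma good_init {n m : ℕ} {H : Fin (m+1) → Vn n} (hH : H ∈ Good n (m+1)) :
    Fin.init H ∈ Good n m := by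
  constructor
  · have : Fin.init H = H ∘ Fin.castSucc := rfl
    rw [this]
    exact hH.1.comp Fin.castSucc (Fin.castSucc_injective m)
  · intro r s
    exact hH.2 _ _

lemma good_last_mem_fib {n m : ℕ} {H : Fin (m+1) → Vn n} (hH : H ∈ Good n (m+1)) :
    H (Fin.last m) ∈ Fib (Fin.init H) := by
  have hsnoc : LinearIndependent F2 (Fin.snoc (Fin.init H) (H (Fin.last m)) : Fin (m+1) → Vn n) := by
    rw [Fin.snoc_init_self]
    exact hH.1
  obtain ⟨hli, hnot⟩ := linearIndependent_fin_snoc.mp hsnoc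
  refine ⟨?_, hnot⟩
  apply mem_orth_of_forall
  intro i
  rw [Bf_apply]
  exact hH.2 _ _

lemma good_snoc {n m : ℕ} {H : Fin m → Vn n} (hH : H ∈ Good n m) {v : Vn n}
    (hv : v ∈ Fib H) : (Fin.snoc H v : Fin (m+1) → Vn n) ∈ Good n (m+1) := by
  constructor
  · exact linearIndependent_fin_snoc.mpr ⟨hH.1, hv.2⟩
  · intro r s
    refine Fin.lastCases ?_ ?_ r
    · refine Fin.lastCases ?_ ?_ s
      · simp only [Fin.snoc_last]
        rw [← Bf_apply]; exact Bf_self v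
      · intro j
        simp only [Fin.snoc_last, Fin.snoc_castSucc]
        rw [← Bf_apply, Bf_symm]
        exact hv.1 (H j) (Submodule.subset_span (Set.mem_range_self j))
    · intro i
      refine Fin.lastCases ?_ ?_ s
      · simp only [Fin.snoc_last, Fin.snoc_castSucc]
        rw [← Bf_apply]
        exact hv.1 (H i) (Submodule.subset_span (Set.mem_range_self i))
      · intro j
        simp only [Fin.snoc_castSucc]
        exact hH.2 i j

lemma good_step (n m : ℕ) :
    Nat.card (Good n (m+1)) = Nat.card (Good n m) * (2 ^ (2 * n - m) - 2 ^ m) := by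
  haveI : Fintype F4 := Fintype.ofFinite F4
  classical
  have hbij : Nat.card (Σ H : Good n m, Fib (H : Fin m → Vn n)) = Nat.card (Good n (m+1)) := by
    apply Nat.card_eq_of_bijective
      (f := fun p => (⟨Fin.snoc p.1.1 p.2.1, good_snoc p.1.2 p.2.2⟩ : Good n (m+1)))
    constructor
    · rintro ⟨⟨H, hH⟩, ⟨v, hv⟩⟩ ⟨⟨H', hH'⟩, ⟨v', hv'⟩⟩ h
      have hsn : (Fin.snoc H v : Fin (m+1) → Vn n) = Fin.snoc H' v' := congrArg Subtype.val h
      have hHH : H = H' := by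
        funext i
        have := congrFun hsn i.castSucc
        simpa [Fin.snoc_castSucc] using this
      subst hHH
      have hvv : v = v' := by
        have := congrFun hsn (Fin.last m)
        simpa [Fin.snoc_last] using this
      subst hvv
      rfl
    · rintro ⟨H, hH⟩
      refine ⟨⟨⟨Fin.init H, good_init hH⟩, ⟨H (Fin.last m), good_last_mem_fib hH⟩⟩, ?_⟩
      exact Subtype.ext (Fin.snoc_init_self H)
  rw [← hbij]
  haveI : ∀ H : Good n m, Fintype (Fib (H : Fin m → Vn n)) := fun H => Fintype.ofFinite _
  haveI : Fintype (Good n m) := Fintype.ofFinite _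
  rw [Nat.card_eq_fintype_card, Fintype.card_sigma]
  have : ∀ H : Good n m, Fintype.card (Fib (H : Fin m → Vn n)) = 2 ^ (2 * n - m) - 2 ^ m := by
    rintro ⟨H, hH⟩
    rw [← Nat.card_eq_fintype_card]
    exact fib_card H hH.1 hH.2
  rw [Finset.sum_congr rfl (fun H _ => this H), Finset.sum_const, Finset.card_univ,
    Nat.card_eq_fintype_card, smul_eq_mul]

lemma good_card (n m : ℕ) :
    Nat.card (Good n m) = ∏ r ∈ Finset.range m, (2 ^ (2 * n - r) - 2 ^ r) := by
  induction m with
  | zero =>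
    rw [Finset.range_zero, Finset.prod_empty]
    have : Good n 0 = Set.univ := by
      ext H
      simp only [Good, Set.mem_setOf_eq, Set.mem_univ, iff_true]
      exact ⟨linearIndependent_empty_type, fun r => r.elim0⟩
    rw [this]
    simp [Nat.card_eq_fintype_card]
  | succ m ih =>
    rw [good_step, ih, Finset.prod_range_succ]

set_option maxHeartbeats 1000000 in
lemma cds_inj {n m : ℕ} {H H' : Fin m → Fin n → F4} (h : CDS H = CDS H') : H = H' := by
  classical
  have key : ∀ (G : Fin m → Fin n → F4) (r : Fin m) (i : Fin n),
      ∑ s, algebraMap F2 F4 ((Pi.single r (1:F2) : Fin m → F2) s) * G s i = G r i := by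
    intro G r i
    rw [Finset.sum_eq_single r]
    · rw [Pi.single_eq_same, map_one, one_mul]
    · intro s _ hs
      rw [Pi.single_eq_of_ne hs, map_zero, zero_mul]
    · intro hr; exact absurd (Finset.mem_univ r) hr
  funext r
  set u0 : Fin m → F2 := Pi.single r 1 with hu0
  have hmem : ((fun i => ∑ s, algebraMap F2 F4 (u0 s) * H s i, u0)
      : (Fin n → F4) × (Fin m → F2)) ∈ CDS H := ⟨u0, rfl⟩
  rw [h] at hmem
  obtain ⟨u, hu⟩ := hmem
  have hsnd : u0 = u := congrArg Prod.snd hu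
  rw [← hsnd] at hu
  have hfst := congrArg Prod.fst hu
  funext i
  have := congrFun hfst i
  simp only at this
  rw [key H r i, key H' r i] at this
  exact this

lemma sds_card (n k : ℕ) : Nat.card (SDS n k) = Nat.card (Good n (n - k)) := by
  symm
  apply Nat.card_eq_of_bijective
    (f := fun H => (⟨CDS H.1, H.1, H.2.1, H.2.2, rfl⟩ : SDS n k))
  constructor
  · rintro ⟨H, hH⟩ ⟨H', hH'⟩ h
    have : CDS H = CDS H' := congrArg Subtype.val h
    exact Subtype.ext (cds_inj this)
  · rintro ⟨D, H, h1, h2, rfl⟩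
    exact ⟨⟨H, h1, h2⟩, rfl⟩


/-- cardinality of the ensemble of DS codes. -/
theorem stmt11 (n k : ℕ) (hk : k ≤ n) :
    (Nat.card (SDS n k) : ℚ) =
      ∏ r ∈ Finset.range (n - k),
        ((2 : ℚ) ^ (2 * (n - r)) - 1) * ((2 : ℚ) ^ (n - k) - 2 ^ r) /
          ((2 : ℚ) ^ (r + 1) - 1) := by
  set m := n - k with hm
  have hmn : m ≤ n := Nat.sub_le n k
  rw [sds_card, good_card]
  -- cast the natural product
  have hcast : ((∏ r ∈ Finset.range m, (2 ^ (2 * n - r) - 2 ^ r) : ℕ) : ℚ) =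
      ∏ r ∈ Finset.range m, ((2:ℚ) ^ (2 * n - r) - 2 ^ r) := by
    rw [Nat.cast_prod]
    refine Finset.prod_congr rfl (fun r hr => ?_)
    have hr' : r < m := Finset.mem_range.mp hr
    have hle : (2:ℕ) ^ r ≤ 2 ^ (2 * n - r) := by
      apply Nat.pow_le_pow_right (by norm_num)
      omega
    push_cast [Nat.cast_sub hle]
    ring
  rw [hcast]
  -- now pure rational identity
  rw [Finset.prod_div_distrib]
  have hQ : (∏ r ∈ Finset.range m, ((2:ℚ) ^ (r+1) - 1)) ≠ 0 := by
    apply Finset.prod_ne_zero_iff.mpr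
    intro r _
    have : (1:ℚ) < 2 ^ (r+1) := by
      apply one_lt_pow₀ (by norm_num) (by omega)
    linarith
  rw [eq_div_iff hQ]
  have hrefl : (∏ r ∈ Finset.range m, ((2:ℚ) ^ (r+1) - 1)) =
      ∏ r ∈ Finset.range m, ((2:ℚ) ^ (m - r) - 1) := by
    rw [← Finset.prod_range_reflect]
    refine Finset.prod_congr rfl (fun r hr => ?_)
    have : m - 1 - r + 1 = m - r := by
      have := Finset.mem_range.mp hr; omega
    rw [this]
  rw [hrefl, ← Finset.prod_mul_distrib]
  refine Finset.prod_congr rfl (fun r hr => ?_)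
  have hr' : r < m := Finset.mem_range.mp hr
  have e1 : (2:ℚ) ^ (2 * n - r) = 2 ^ r * 2 ^ (2 * (n - r)) := by
    rw [← pow_add]
    congr 1
    omega
  have e2 : (2:ℚ) ^ m = 2 ^ r * 2 ^ (m - r) := by
    rw [← pow_add]
    congr 1
    omega
  rw [e1, e2]
  ring
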